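/- arXiv:1711.11268 — 7 statements merged into one kernel-verified Lean document; each statement's English description precedes it below -/
import Mathlib

section
/- Let (b,B) be a geometric pair on ℝⁿ. Then (B⋆)⋆ = B holds if and only if B is b-normal, i.e. B B⋆ = B⋆ B. -/
/-- `(B⋆)⋆ = B` iff `B` is `b`-normal, i.e. `B B⋆ = B⋆ B`. -/
theorem stmt_4 {n : ℕ}
    (b : EuclideanSpace ℝ (Fin n) →ₗ[ℝ] EuclideanSpace ℝ (Fin n) →ₗ[ℝ] ℝ)
    (hL : ∀ x, (∀ y, b x y = 0) → x = 0)
    (hR : ∀ y, (∀ x, b x y = 0) → y = 0)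
    (B : EuclideanSpace ℝ (Fin n) →ₗ[ℝ] EuclideanSpace ℝ (Fin n))
    (hBbij : Function.Bijective B)
    (hB : ∀ x y, (inner ℝ x y : ℝ) = b x (B y))
    (Bstar : EuclideanSpace ℝ (Fin n) →ₗ[ℝ] EuclideanSpace ℝ (Fin n))
    (hBstar : ∀ x y, b (Bstar x) y = b x (B y))
    (Bstarstar : EuclideanSpace ℝ (Fin n) →ₗ[ℝ] EuclideanSpace ℝ (Fin n))
    (hBstarstar : ∀ x y, b (Bstarstar x) y = b x (Bstar y)) :
    Bstarstar = B ↔ B ∘ₗ Bstar = Bstar ∘ₗ B := by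
  -- Key fact: `⟪B x, z⟫ = ⟪x, B⋆ z⟫` (i.e. `B⋆` is the Euclidean transpose of `B`).
  have key : ∀ x z, (inner ℝ (B x) z : ℝ) = inner ℝ x (Bstar z) := by
    intro x z
    calc (inner ℝ (B x) z : ℝ) = inner ℝ z (B x) := real_inner_comm _ _
      _ = b z (B (B x)) := hB z (B x)
      _ = b (Bstar z) (B x) := (hBstar z (B x)).symm
      _ = (inner ℝ (Bstar z) x : ℝ) := (hB (Bstar z) x).symm
      _ = inner ℝ x (Bstar z) := real_inner_comm _ _
  constructor
  · intro h
    apply LinearMap.ext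
    intro y
    simp only [LinearMap.comp_apply]
    have : ∀ x, b x (B (Bstar y) - Bstar (B y)) = 0 := by
      intro x
      have h1 : b x (B (Bstar y)) = b (B x) (B y) := by
        rw [← hB x (Bstar y), ← key x y, hB (B x) y]
      have h2 : b x (Bstar (B y)) = b (B x) (B y) := by
        rw [← hBstarstar x (B y), h]
      rw [map_sub, h1, h2, sub_self]
    exact sub_eq_zero.mp (hR _ this)
  · intro h
    apply LinearMap.ext
    intro x
    have : ∀ y, b (Bstarstar x - B x) y = 0 := by
      intro y
      obtain ⟨z, rfl⟩ := hBbij.2 y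
      have h1 : b (Bstarstar x) (B z) = b x (Bstar (B z)) := hBstarstar x (B z)
      have h2 : b x (Bstar (B z)) = b (B x) (B z) := by
        have := congrArg (fun f => f z) h
        simp only [LinearMap.comp_apply] at this
        rw [← this, ← hB x (Bstar z), ← key x z, hB (B x) z]
      rw [map_sub, LinearMap.sub_apply, h1, h2, sub_self]
    exact sub_eq_zero.mp (hL _ this)
end

section
/- Let b be a nondegenerate bilinear form on ℝⁿ with geometric pair (b,B). A C¹ vector field X on ℝⁿ satisfies X = ∇ᵇᴸH for some C² function H if and only if (DX(x))ᵀ B⁻¹ = (B⋆)⁻¹ DX(x) for all x ∈ ℝⁿ, where DX(x) is the Jacobian of X at x. -/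
set_option maxHeartbeats 1000000
set_option synthInstance.maxHeartbeats 400000

open ContinuousLinearMap Metric MeasureTheory
open scoped RealInnerProductSpace

section Aux
variable {E : Type*} [NormedAddCommGroup E] [InnerProductSpace ℝ E] [ProperSpace E]

lemma poincare_hasFDerivAt' (Y : E → E) (hY : ContDiff ℝ 1 Y)
    (hsym : ∀ x v w, ⟪fderiv ℝ Y x v, w⟫ = ⟪fderiv ℝ Y x w, v⟫) (x₀ : E) :
    HasFDerivAt (fun x => ∫ t in (0:ℝ)..1, ⟪Y (t • x), x⟫) (innerSL ℝ (Y x₀)) x₀ := by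
  have hYd : Differentiable ℝ Y := hY.differentiable one_ne_zero
  have hYc : Continuous Y := hY.continuous
  have hY'c : Continuous (fderiv ℝ Y) := hY.continuous_fderiv one_ne_zero
  set F' : E → ℝ → E →L[ℝ] ℝ := fun x t =>
    ((innerSL ℝ x).comp ((fderiv ℝ Y (t • x)).comp (t • ContinuousLinearMap.id ℝ E)))
      + innerSL ℝ (Y (t • x)) with hF'
  have hdiff : ∀ t : ℝ, ∀ x : E, HasFDerivAt (fun y => ⟪Y (t • y), y⟫) (F' x t) x := by
    intro t x
    have hs : HasFDerivAt (fun y : E => t • y) (t • ContinuousLinearMap.id ℝ E) x :=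
      (hasFDerivAt_id x).const_smul t
    have h1 : HasFDerivAt (fun y => Y (t • y))
        ((fderiv ℝ Y (t • x)).comp (t • ContinuousLinearMap.id ℝ E)) x :=
      (hYd (t • x)).hasFDerivAt.comp x hs
    have h2 := (h1.inner ℝ (hasFDerivAt_id x))
    refine h2.congr_fderiv ?_
    ext v
    simp [F', fderivInnerCLM_apply, real_inner_comm, real_inner_smul_right]
    ring
  obtain ⟨C, hC⟩ : ∃ C, ∀ z ∈ closedBall (0 : E) (‖x₀‖ + 1),
      ‖Y z‖ ≤ C ∧ ‖fderiv ℝ Y z‖ ≤ C := by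
    obtain ⟨C₁, hC₁⟩ := (isCompact_closedBall (0 : E) (‖x₀‖ + 1)).exists_bound_of_continuousOn
      hYc.continuousOn
    obtain ⟨C₂, hC₂⟩ := (isCompact_closedBall (0 : E) (‖x₀‖ + 1)).exists_bound_of_continuousOn
      hY'c.continuousOn
    exact ⟨max C₁ C₂, fun z hz => ⟨(hC₁ z hz).trans (le_max_left _ _),
      (hC₂ z hz).trans (le_max_right _ _)⟩⟩
  have hCnn : 0 ≤ C := by
    have h0 := hC 0 (by simp; positivity)
    exact le_trans (norm_nonneg _) h0.1
  have hball : ∀ t ∈ Set.uIoc (0:ℝ) 1, ∀ x ∈ ball x₀ 1,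
      t • x ∈ closedBall (0 : E) (‖x₀‖ + 1) := by
    intro t ht x hx
    rw [Set.uIoc_of_le zero_le_one] at ht
    rw [mem_closedBall_zero_iff, norm_smul, Real.norm_eq_abs]
    have h1 : ‖x - x₀‖ < 1 := mem_ball_iff_norm.mp hx
    have h2 : ‖x‖ - ‖x₀‖ ≤ ‖x - x₀‖ := norm_sub_norm_le x x₀
    have ht1 : |t| ≤ 1 := by rw [abs_le]; constructor <;> [linarith [ht.1]; exact ht.2]
    nlinarith [norm_nonneg x, abs_nonneg t]
  have hbound : ∀ t ∈ Set.uIoc (0:ℝ) 1, ∀ x ∈ ball x₀ 1,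
      ‖F' x t‖ ≤ (‖x₀‖ + 1) * C + C := by
    intro t ht x hx
    obtain ⟨hb1, hb2⟩ := hC _ (hball t ht x hx)
    have ht1 : |t| ≤ 1 := by
      rw [Set.uIoc_of_le zero_le_one] at ht
      rw [abs_le]; constructor <;> [linarith [ht.1]; exact ht.2]
    have hx1 : ‖x‖ ≤ ‖x₀‖ + 1 := by
      have h1 : ‖x - x₀‖ < 1 := mem_ball_iff_norm.mp hx
      have h2 : ‖x‖ - ‖x₀‖ ≤ ‖x - x₀‖ := norm_sub_norm_le x x₀
      linarith
    have hsmul : ‖t • ContinuousLinearMap.id ℝ E‖ ≤ 1 := by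
      calc ‖t • ContinuousLinearMap.id ℝ E‖ ≤ ‖t‖ * ‖ContinuousLinearMap.id ℝ E‖ :=
            ContinuousLinearMap.opNorm_smul_le _ _
        _ ≤ 1 * 1 := by
            apply mul_le_mul _ norm_id_le (norm_nonneg _) zero_le_one
            rw [Real.norm_eq_abs]; exact ht1
        _ = 1 := one_mul 1
    have a1 := opNorm_comp_le (innerSL ℝ x)
      ((fderiv ℝ Y (t • x)).comp (t • ContinuousLinearMap.id ℝ E))
    have a2 := opNorm_comp_le (fderiv ℝ Y (t • x)) (t • ContinuousLinearMap.id ℝ E)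
    rw [innerSL_apply_norm] at a1
    have hcomp : ‖(innerSL ℝ x).comp
        ((fderiv ℝ Y (t • x)).comp (t • ContinuousLinearMap.id ℝ E))‖ ≤ (‖x₀‖ + 1) * C := by
      calc ‖(innerSL ℝ x).comp ((fderiv ℝ Y (t • x)).comp (t • ContinuousLinearMap.id ℝ E))‖
          ≤ ‖x‖ * (‖fderiv ℝ Y (t • x)‖ * ‖t • ContinuousLinearMap.id ℝ E‖) :=
            a1.trans (mul_le_mul_of_nonneg_left a2 (norm_nonneg x))
        _ ≤ (‖x₀‖ + 1) * (C * 1) := by gcongr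
        _ = (‖x₀‖ + 1) * C := by ring
    calc ‖F' x t‖
        ≤ ‖(innerSL ℝ x).comp ((fderiv ℝ Y (t • x)).comp (t • ContinuousLinearMap.id ℝ E))‖
          + ‖innerSL ℝ (Y (t • x))‖ := norm_add_le _ _
      _ ≤ (‖x₀‖ + 1) * C + C := by
          apply add_le_add hcomp
          rw [innerSL_apply_norm]; exact hb1
  -- continuity of t ↦ F' x₀ t
  have cF' : Continuous (F' x₀) := by
    have c1 : Continuous fun t : ℝ => fderiv ℝ Y (t • x₀) :=
      hY'c.comp (continuous_id.smul continuous_const)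
    have c2 : Continuous fun t : ℝ => t • ContinuousLinearMap.id ℝ E :=
      continuous_id.smul continuous_const
    exact (continuous_const.clm_comp (c1.clm_comp c2)).add
      ((innerSL ℝ).continuous.comp (hYc.comp (continuous_id.smul continuous_const)))
  have key := intervalIntegral.hasFDerivAt_integral_of_dominated_of_fderiv_le
    (F := fun x t => (⟪Y (t • x), x⟫ : ℝ)) (F' := F') (x₀ := x₀) (a := 0) (b := 1)
    (μ := volume) (bound := fun _ => (‖x₀‖ + 1) * C + C) (ball_mem_nhds x₀ one_pos)
    (Filter.Eventually.of_forall fun x =>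
      (((hYc.comp (continuous_id.smul continuous_const)).inner
        continuous_const).aestronglyMeasurable))
    (Continuous.intervalIntegrable
      ((hYc.comp (continuous_id.smul continuous_const)).inner continuous_const) 0 1)
    cF'.aestronglyMeasurable.restrict
    (Filter.Eventually.of_forall fun t ht x hx => hbound t ht x hx)
    intervalIntegrable_const
    (Filter.Eventually.of_forall fun t _ x _ => hdiff t x)
  -- identify the derivative with innerSL ℝ (Y x₀)
  have hint : IntervalIntegrable (F' x₀) volume 0 1 := cF'.intervalIntegrable 0 1
  have hid : (∫ t in (0:ℝ)..1, F' x₀ t) = innerSL ℝ (Y x₀) := by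
    ext v
    rw [ContinuousLinearMap.intervalIntegral_apply hint v]
    have hg : ∀ t : ℝ, HasDerivAt (fun t : ℝ => t * ⟪Y (t • x₀), v⟫) (F' x₀ t v) t := by
      intro t
      have h1 : HasDerivAt (fun t : ℝ => t • x₀) x₀ t := by
        simpa using (hasDerivAt_id t).smul_const x₀
      have h2 : HasDerivAt (fun t : ℝ => Y (t • x₀)) (fderiv ℝ Y (t • x₀) x₀) t :=
        (hYd (t • x₀)).hasFDerivAt.comp_hasDerivAt t h1
      have h3 : HasDerivAt (fun t : ℝ => (⟪Y (t • x₀), v⟫ : ℝ))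
          ⟪fderiv ℝ Y (t • x₀) x₀, v⟫ t := by
        simpa using h2.inner ℝ (hasDerivAt_const t v)
      have h4 := (hasDerivAt_id t).mul h3
      refine h4.congr_deriv ?_
      simp only [F', ContinuousLinearMap.add_apply, ContinuousLinearMap.comp_apply,
        ContinuousLinearMap.smul_apply, ContinuousLinearMap.coe_id', id_eq, innerSL_apply_apply]
      have e1 : (⟪x₀, fderiv ℝ Y (t • x₀) (t • v)⟫ : ℝ) = t * ⟪fderiv ℝ Y (t • x₀) x₀, v⟫ := by
        rw [real_inner_comm, hsym (t • x₀) (t • v) x₀, real_inner_smul_right]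
      rw [e1]
      ring
    have hcont : Continuous fun t : ℝ => F' x₀ t v :=
      (ContinuousLinearMap.apply ℝ ℝ v).continuous.comp cF'
    rw [intervalIntegral.integral_eq_sub_of_hasDerivAt (fun t _ => hg t)
      (hcont.intervalIntegrable 0 1)]
    simp
  rw [← hid]
  exact key

end Aux

open ContinuousLinearMap in
/-- `X` is a left `b`-gradient vector field of some `C²` potential
iff `(DX(x))ᵀ B⁻¹ = (B⋆)⁻¹ DX(x)` for all `x`, where `B⋆ = Bᵀ` so that
`(B⋆)⁻¹ = (B⁻¹)ᵀ`. -/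
theorem stmt_7 {n : ℕ}
    (b : EuclideanSpace ℝ (Fin n) →ₗ[ℝ] EuclideanSpace ℝ (Fin n) →ₗ[ℝ] ℝ)
    (hL : ∀ x, (∀ y, b x y = 0) → x = 0)
    (hR : ∀ y, (∀ x, b x y = 0) → y = 0)
    (B : EuclideanSpace ℝ (Fin n) ≃L[ℝ] EuclideanSpace ℝ (Fin n))
    (hB : ∀ x y, (inner ℝ x y : ℝ) = b x (B y))
    (X : EuclideanSpace ℝ (Fin n) → EuclideanSpace ℝ (Fin n))
    (hX : ContDiff ℝ 1 X) :
    (∃ H : EuclideanSpace ℝ (Fin n) → ℝ, ContDiff ℝ 2 H ∧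
        ∀ x v, b (X x) v = fderiv ℝ H x v) ↔
      (∀ x, (adjoint (fderiv ℝ X x)) ∘L
          (B.symm : EuclideanSpace ℝ (Fin n) →L[ℝ] EuclideanSpace ℝ (Fin n)) =
        (adjoint (B.symm : EuclideanSpace ℝ (Fin n) →L[ℝ] EuclideanSpace ℝ (Fin n))) ∘L
          fderiv ℝ X x) := by
  have hXd : Differentiable ℝ X := hX.differentiable one_ne_zero
  set Bs : EuclideanSpace ℝ (Fin n) →L[ℝ] EuclideanSpace ℝ (Fin n) :=
    (B.symm : EuclideanSpace ℝ (Fin n) →L[ℝ] EuclideanSpace ℝ (Fin n)) with hBsdef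
  set A := adjoint Bs with hAdef
  set Y : EuclideanSpace ℝ (Fin n) → EuclideanSpace ℝ (Fin n) := fun x => A (X x) with hYdef
  have hY : ContDiff ℝ 1 Y := A.contDiff.comp hX
  have hYd : Differentiable ℝ Y := hY.differentiable one_ne_zero
  have hb : ∀ x v, b x v = ⟪x, Bs v⟫ := by
    intro x v
    have h := hB x (B.symm v)
    simp only [B.apply_symm_apply] at h
    exact h.symm
  have hbY : ∀ x v, b (X x) v = ⟪Y x, v⟫ := by
    intro x v
    rw [hb]
    exact (ContinuousLinearMap.adjoint_inner_left Bs v (X x)).symm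
  have hDY : ∀ x, fderiv ℝ Y x = A ∘L fderiv ℝ X x := fun x =>
    (A.hasFDerivAt.comp x (hXd x).hasFDerivAt).fderiv
  have hiff : ∀ x, ((adjoint (fderiv ℝ X x)) ∘L Bs = A ∘L fderiv ℝ X x) ↔
      (∀ v w, ⟪fderiv ℝ Y x v, w⟫ = ⟪fderiv ℝ Y x w, v⟫) := by
    intro x
    set D := fderiv ℝ X x with hDdef
    set T := A ∘L D with hTdef
    have hadj : adjoint T = adjoint D ∘L Bs := by
      rw [hTdef, adjoint_comp, hAdef, adjoint_adjoint]
    have hDYx : fderiv ℝ Y x = T := hDY x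
    rw [hDYx]
    constructor
    · intro h v w
      have h1 : adjoint T = T := by rw [hadj, h]
      calc ⟪T v, w⟫ = ⟪(adjoint T) v, w⟫ := by rw [h1]
        _ = ⟪v, T w⟫ := adjoint_inner_left T w v
        _ = ⟪T w, v⟫ := real_inner_comm _ _
    · intro h
      rw [← hadj]
      refine ContinuousLinearMap.ext fun v => ?_
      refine ext_inner_right ℝ fun w => ?_
      calc ⟪(adjoint T) v, w⟫ = ⟪v, T w⟫ := adjoint_inner_left T w v
        _ = ⟪T w, v⟫ := real_inner_comm _ _
        _ = ⟪T v, w⟫ := (h v w).symm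
  constructor
  · rintro ⟨H, hH, hpot⟩ x
    rw [hiff x]
    intro v w
    have hfd : (fun y => innerSL ℝ (Y y)) = fderiv ℝ H := by
      funext y
      ext u
      have : (innerSL ℝ (Y y)) u = ⟪Y y, u⟫ := rfl
      rw [this, ← hbY, hpot]
    have hsymm := (hH.contDiffAt (x := x)).isSymmSndFDerivAt (by simp [minSmoothness_of_isRCLikeNormedField])
    have hd2 : HasFDerivAt (fun y => innerSL ℝ (Y y))
        ((innerSL ℝ : EuclideanSpace ℝ (Fin n) →L[ℝ]
          (EuclideanSpace ℝ (Fin n) →L[ℝ] ℝ)) ∘L fderiv ℝ Y x) x :=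
      (ContinuousLinearMap.hasFDerivAt _).comp x (hYd x).hasFDerivAt
    have hsnd : fderiv ℝ (fderiv ℝ H) x = (innerSL ℝ : EuclideanSpace ℝ (Fin n) →L[ℝ]
        (EuclideanSpace ℝ (Fin n) →L[ℝ] ℝ)) ∘L fderiv ℝ Y x := by
      rw [← hfd]; exact hd2.fderiv
    have he := hsymm.eq v w
    rw [hsnd] at he
    exact he
  · intro h
    have hsym : ∀ x v w, ⟪fderiv ℝ Y x v, w⟫ = ⟪fderiv ℝ Y x w, v⟫ := fun x => (hiff x).mp (h x)
    have hd := poincare_hasFDerivAt' Y hY hsym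
    refine ⟨fun x => ∫ t in (0:ℝ)..1, ⟪Y (t • x), x⟫, ?_, ?_⟩
    · have hfd : fderiv ℝ (fun x => ∫ t in (0:ℝ)..1, ⟪Y (t • x), x⟫)
          = fun x => innerSL ℝ (Y x) := funext fun x => (hd x).fderiv
      rw [show (2 : WithTop ℕ∞) = 1 + 1 from rfl, contDiff_succ_iff_fderiv]
      refine ⟨fun x => (hd x).differentiableAt, by simp, ?_⟩
      rw [hfd]
      exact (innerSL ℝ).contDiff.comp hY
    · intro x v
      rw [hbY, (hd x).fderiv]
      rfl
end

section
/- Let b be a nondegenerate bilinear form on ℝⁿ with geometric pair (b,B), and let X be a C¹ vector field on ℝⁿ satisfying (DX(x))ᵀB⁻¹ = (B⋆)⁻¹DX(x) for all x. Then the function H(x) = ∫₀¹ b(X(tx), x) dt satisfies X = ∇ᵇᴸH, i.e. b(∇ᵇᴸH(x), v) = dH(x)·v implies b(X(x), v) = dH(x)·v for all x, v. -/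
set_option maxHeartbeats 1000000
open ContinuousLinearMap MeasureTheory Metric
open scoped RealInnerProductSpace


open ContinuousLinearMap in
/-- If `(DX(x))ᵀ B⁻¹ = (B⋆)⁻¹ DX(x)` for all `x`, then
`H(x) = ∫₀¹ b(X(tx), x) dt` satisfies `X = ∇ᵇᴸH`, i.e.
`b (X x) v = dH(x)·v` for all `x, v`. -/
theorem stmt_8 {n : ℕ}
    (b : EuclideanSpace ℝ (Fin n) →ₗ[ℝ] EuclideanSpace ℝ (Fin n) →ₗ[ℝ] ℝ)
    (hL : ∀ x, (∀ y, b x y = 0) → x = 0)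
    (hR : ∀ y, (∀ x, b x y = 0) → y = 0)
    (B : EuclideanSpace ℝ (Fin n) ≃L[ℝ] EuclideanSpace ℝ (Fin n))
    (hB : ∀ x y, (inner ℝ x y : ℝ) = b x (B y))
    (X : EuclideanSpace ℝ (Fin n) → EuclideanSpace ℝ (Fin n))
    (hX : ContDiff ℝ 1 X)
    (hsolv : ∀ x, (adjoint (fderiv ℝ X x)) ∘L
          (B.symm : EuclideanSpace ℝ (Fin n) →L[ℝ] EuclideanSpace ℝ (Fin n)) =
        (adjoint (B.symm : EuclideanSpace ℝ (Fin n) →L[ℝ] EuclideanSpace ℝ (Fin n))) ∘L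
          fderiv ℝ X x)
    (H : EuclideanSpace ℝ (Fin n) → ℝ)
    (hH : ∀ x, H x = ∫ t in (0:ℝ)..1, b (X (t • x)) x) :
    ∀ x v, b (X x) v = fderiv ℝ H x v := by
  set S := (B.symm : EuclideanSpace ℝ (Fin n) →L[ℝ] EuclideanSpace ℝ (Fin n)) with hS
  have hb : ∀ x z : EuclideanSpace ℝ (Fin n), b x z = ⟪x, S z⟫ := by
    intro x z
    have := hB x (B.symm z)
    rw [hS]; simpa using this.symm
  have hsym : ∀ y v w : EuclideanSpace ℝ (Fin n),
      ⟪fderiv ℝ X y v, S w⟫ = ⟪fderiv ℝ X y w, S v⟫ := by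
    intro y v w
    set A := fderiv ℝ X y with hA
    have h1 : ⟪A v, S w⟫ = ⟪v, adjoint A (S w)⟫ := (adjoint_inner_right A v (S w)).symm
    have h2 : adjoint A (S w) = adjoint S (A w) := by
      have := congrFun (congrArg DFunLike.coe (hsolv y)) w
      simpa [← hA, ← hS] using this
    rw [h1, h2, adjoint_inner_right, real_inner_comm]
  have hXc : Continuous X := hX.continuous
  have hDXc : Continuous (fderiv ℝ X) := hX.continuous_fderiv one_ne_zero
  set F' : EuclideanSpace ℝ (Fin n) → ℝ → EuclideanSpace ℝ (Fin n) →L[ℝ] ℝ := fun x t =>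
    (innerSL ℝ (S x)).comp (t • fderiv ℝ X (t • x)) + (innerSL ℝ (X (t • x))).comp S with hF'
  have hF'c : Continuous (fun p : ℝ × EuclideanSpace ℝ (Fin n) => F' p.2 p.1) := by
    apply Continuous.add
    · exact ((innerSL ℝ).continuous.comp (S.continuous.comp continuous_snd)).clm_comp
        (continuous_fst.smul (hDXc.comp (continuous_fst.smul continuous_snd)))
    · exact (((innerSL ℝ).continuous.comp (hXc.comp
        (continuous_fst.smul continuous_snd))).clm_comp continuous_const)
  clear_value F'
  intro x₀ v
  have hdF : ∀ (t : ℝ) (x : EuclideanSpace ℝ (Fin n)),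
      HasFDerivAt (fun y : EuclideanSpace ℝ (Fin n) => (⟪X (t • y), S y⟫ : ℝ)) (F' x t) x := by
    intro t x
    have hsm : HasFDerivAt (fun y : EuclideanSpace ℝ (Fin n) => t • y)
        (t • (1 : EuclideanSpace ℝ (Fin n) →L[ℝ] EuclideanSpace ℝ (Fin n))) x :=
      (hasFDerivAt_id x).const_smul t
    have h1 : HasFDerivAt (fun y : EuclideanSpace ℝ (Fin n) => X (t • y))
        ((fderiv ℝ X (t • x)).comp (t • (1 : EuclideanSpace ℝ (Fin n) →L[ℝ] EuclideanSpace ℝ (Fin n)))) x :=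
      ((hX.differentiable one_ne_zero (t • x)).hasFDerivAt).comp x hsm
    have h2 : HasFDerivAt (fun y : EuclideanSpace ℝ (Fin n) => S y) S x := S.hasFDerivAt
    refine (h1.inner ℝ h2).congr_fderiv ?_
    apply ContinuousLinearMap.ext; intro w
    simp only [hF', ContinuousLinearMap.add_apply, ContinuousLinearMap.comp_apply,
      ContinuousLinearMap.smul_apply, ContinuousLinearMap.one_apply, innerSL_apply_apply,
      fderivInnerCLM_apply, ContinuousLinearMap.prod_apply, ContinuousLinearMap.map_smul,
      real_inner_smul_left, real_inner_smul_right, smul_eq_mul]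
    rw [real_inner_comm (S x)]
    ring
  obtain ⟨C, hC⟩ : ∃ C, ∀ p ∈ (Set.Icc (0:ℝ) 1) ×ˢ closedBall x₀ 1, ‖F' p.2 p.1‖ ≤ C :=
    ((isCompact_Icc.prod (isCompact_closedBall x₀ 1)).exists_bound_of_continuousOn
      hF'c.continuousOn)
  have key : HasFDerivAt H (∫ t in (0:ℝ)..1, F' x₀ t) x₀ := by
    have m1 : ∀ᶠ x in nhds x₀, AEStronglyMeasurable
        (fun t : ℝ => (⟪X (t • x), S x⟫ : ℝ)) (volume.restrict (Set.uIoc (0:ℝ) 1)) := by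
      filter_upwards with x
      exact (Continuous.aestronglyMeasurable
        ((hXc.comp (continuous_id.smul continuous_const)).inner continuous_const))
    have m2 : IntervalIntegrable (fun t : ℝ => (⟪X (t • x₀), S x₀⟫ : ℝ)) volume 0 1 :=
      (Continuous.intervalIntegrable
        ((hXc.comp (continuous_id.smul continuous_const)).inner continuous_const) _ _)
    have m3 : AEStronglyMeasurable (F' x₀) (volume.restrict (Set.uIoc (0:ℝ) 1)) :=
      (Continuous.aestronglyMeasurable
        (hF'c.comp (continuous_id.prodMk continuous_const)))
    have m4 : ∀ᵐ t ∂(volume : Measure ℝ), t ∈ Set.uIoc (0:ℝ) 1 →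
        ∀ x ∈ ball x₀ 1, ‖F' x t‖ ≤ C := by
      filter_upwards with t ht x hx
      refine hC (t, x) ⟨?_, ball_subset_closedBall hx⟩
      rw [Set.uIoc_of_le (by norm_num : (0:ℝ) ≤ 1)] at ht
      exact ⟨le_of_lt ht.1, ht.2⟩
    have m5 : IntervalIntegrable (fun _ : ℝ => C) volume 0 1 := intervalIntegrable_const
    have m6 : ∀ᵐ t ∂(volume : Measure ℝ), t ∈ Set.uIoc (0:ℝ) 1 →
        ∀ x ∈ ball x₀ 1, HasFDerivAt (fun x => (⟪X (t • x), S x⟫ : ℝ)) (F' x t) x := by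
      filter_upwards with t ht x hx
      exact hdF t x
    have hAE : HasFDerivAt (fun x => ∫ t in (0:ℝ)..1, (⟪X (t • x), S x⟫ : ℝ))
        (∫ t in (0:ℝ)..1, F' x₀ t) x₀ :=
      intervalIntegral.hasFDerivAt_integral_of_dominated_of_fderiv_le (ball_mem_nhds x₀ one_pos) m1 m2 m3 m4 m5 m6
    have hfun : H = fun x => ∫ t in (0:ℝ)..1, (⟪X (t • x), S x⟫ : ℝ) := by
      funext x; rw [hH x]; congr 1; funext t; exact hb _ _
    rw [hfun]; exact hAE
  rw [key.fderiv]
  have hint : IntervalIntegrable (F' x₀) volume 0 1 :=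
    Continuous.intervalIntegrable (hF'c.comp (continuous_id.prodMk continuous_const)) _ _
  rw [ContinuousLinearMap.intervalIntegral_apply hint v, hb]
  have hg : ∀ t ∈ Set.uIcc (0:ℝ) 1, HasDerivAt (fun t : ℝ => t * ⟪X (t • x₀), S v⟫)
      (F' x₀ t v) t := by
    intro t _
    have h1 : HasDerivAt (fun t : ℝ => X (t • x₀)) (fderiv ℝ X (t • x₀) x₀) t := by
      have hsm : HasDerivAt (fun t : ℝ => t • x₀) x₀ t := by
        simpa using (hasDerivAt_id t).smul_const x₀
      exact (((hX.differentiable one_ne_zero (t • x₀)).hasFDerivAt).comp_hasDerivAt t hsm)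
    have h2 : HasDerivAt (fun t : ℝ => (⟪X (t • x₀), S v⟫ : ℝ))
        (⟪fderiv ℝ X (t • x₀) x₀, S v⟫ : ℝ) t := by
      have := h1.inner ℝ (hasDerivAt_const t (S v))
      simpa using this
    have h3 : HasDerivAt (fun t : ℝ => t * ⟪X (t • x₀), S v⟫)
        (1 * ⟪X (t • x₀), S v⟫ + t * ⟪fderiv ℝ X (t • x₀) x₀, S v⟫) t := (hasDerivAt_id t).mul h2
    convert h3 using 1
    simp only [hF', ContinuousLinearMap.add_apply, ContinuousLinearMap.comp_apply,
      ContinuousLinearMap.smul_apply, innerSL_apply_apply, id_eq]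
    rw [real_inner_smul_right]
    rw [show (⟪S x₀, fderiv ℝ X (t • x₀) v⟫ : ℝ) = ⟪fderiv ℝ X (t • x₀) v, S x₀⟫ from
      real_inner_comm _ _, hsym, real_inner_comm]
    ring
  have hint2 : IntervalIntegrable (fun t => F' x₀ t v) volume 0 1 :=
    Continuous.intervalIntegrable
      ((hF'c.comp (continuous_id.prodMk continuous_const)).clm_apply continuous_const) _ _
  have := intervalIntegral.integral_eq_sub_of_hasDerivAt hg hint2
  rw [this]; simp
end

section
/- Let b be a nondegenerate bilinear form on ℝⁿ and X a C¹ vector field on ℝⁿ. Then there exists a unique pair (H, u) where H : ℝⁿ → ℝ is C¹ with H(0) = 0 and u : ℝⁿ → ℝⁿ is continuous with b(x, u(x)) = 0 for all x, such that X(x) = ∇ᵇᴿH(x) + u(x) for all x ∈ ℝⁿ. Moreover H(x) = ∫₀¹ (1/t) b(tx, X(tx)) dt. -/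
open MeasureTheory intervalIntegral InnerProductSpace Metric Set

noncomputable section Stmt13Aux

/-- The continuous bilinear version of a bilinear form on a finite-dimensional space. -/
noncomputable def stmt13clm2 {n : ℕ}
    (b : EuclideanSpace ℝ (Fin n) →ₗ[ℝ] EuclideanSpace ℝ (Fin n) →ₗ[ℝ] ℝ) :
    EuclideanSpace ℝ (Fin n) →L[ℝ] EuclideanSpace ℝ (Fin n) →L[ℝ] ℝ :=
  LinearMap.toContinuousLinearMap
    { toFun := fun x => LinearMap.toContinuousLinearMap (b x)
      map_add' := fun x y => by ext v; simp
      map_smul' := fun c x => by ext v; simp }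

@[simp] lemma stmt13clm2_apply {n : ℕ}
    (b : EuclideanSpace ℝ (Fin n) →ₗ[ℝ] EuclideanSpace ℝ (Fin n) →ₗ[ℝ] ℝ)
    (x y : EuclideanSpace ℝ (Fin n)) : stmt13clm2 b x y = b x y := rfl

/-- Key analytic lemma: existence of a `C¹` potential along rays. -/
lemma stmt13key {n : ℕ}
    (b' : EuclideanSpace ℝ (Fin n) →L[ℝ] EuclideanSpace ℝ (Fin n) →L[ℝ] ℝ)
    (X : EuclideanSpace ℝ (Fin n) → EuclideanSpace ℝ (Fin n))
    (hX : ContDiff ℝ 1 X) :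
    ∃ H : EuclideanSpace ℝ (Fin n) → ℝ, ContDiff ℝ 1 H ∧ H 0 = 0 ∧
      ∀ x, fderiv ℝ H x x = b' x (X x) := by
  classical
  have hXd : Differentiable ℝ X := hX.differentiable one_ne_zero
  have hXc : Continuous X := hX.continuous
  have hX' : Continuous (fderiv ℝ X) := (contDiff_one_iff_fderiv.mp hX).2
  set D : EuclideanSpace ℝ (Fin n) → ℝ → (EuclideanSpace ℝ (Fin n) →L[ℝ] ℝ) := fun x t =>
    b'.precompR (EuclideanSpace ℝ (Fin n)) x ((fderiv ℝ X (t • x)).comp (t • ContinuousLinearMap.id ℝ (EuclideanSpace ℝ (Fin n)))) +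
      b'.precompL (EuclideanSpace ℝ (Fin n)) (ContinuousLinearMap.id ℝ (EuclideanSpace ℝ (Fin n))) (X (t • x)) with hDdef
  set H : EuclideanSpace ℝ (Fin n) → ℝ := fun x => ∫ t in (0:ℝ)..1, b' x (X (t • x)) with hHdef
  -- pointwise derivative of the integrand in the parameter
  have hder : ∀ (t : ℝ) (x : EuclideanSpace ℝ (Fin n)),
      HasFDerivAt (fun y : EuclideanSpace ℝ (Fin n) => b' y (X (t • y))) (D x t) x := by
    intro t x
    have h1 : HasFDerivAt (fun y : EuclideanSpace ℝ (Fin n) => t • y) (t • ContinuousLinearMap.id ℝ (EuclideanSpace ℝ (Fin n))) x :=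
      (hasFDerivAt_id x).const_smul t
    have h2 : HasFDerivAt (fun y : EuclideanSpace ℝ (Fin n) => X (t • y))
        ((fderiv ℝ X (t • x)).comp (t • ContinuousLinearMap.id ℝ (EuclideanSpace ℝ (Fin n)))) x :=
      ((hXd (t • x)).hasFDerivAt).comp x h1
    exact b'.hasFDerivAt_of_bilinear (hasFDerivAt_id x) h2
  -- continuity of `D` jointly
  have hsmul : Continuous fun p : EuclideanSpace ℝ (Fin n) × ℝ => p.2 • p.1 := continuous_snd.smul continuous_fst
  have hDcont : Continuous fun p : EuclideanSpace ℝ (Fin n) × ℝ => D p.1 p.2 := by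
    apply Continuous.add
    · exact ((b'.precompR (EuclideanSpace ℝ (Fin n))).continuous.comp continuous_fst).clm_apply
        (Continuous.clm_comp (hX'.comp hsmul)
          (continuous_snd.smul continuous_const))
    · exact (b'.precompL (EuclideanSpace ℝ (Fin n)) (ContinuousLinearMap.id ℝ (EuclideanSpace ℝ (Fin n)))).continuous.comp (hXc.comp hsmul)
  have hFcont : Continuous fun p : EuclideanSpace ℝ (Fin n) × ℝ => b' p.1 (X (p.2 • p.1)) :=
    (b'.continuous.comp continuous_fst).clm_apply (hXc.comp hsmul)
  -- `H` has derivative `∫ t in 0..1, D x t` at every point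
  have hΦ : ∀ x₀ : EuclideanSpace ℝ (Fin n), HasFDerivAt H (∫ t in (0:ℝ)..1, D x₀ t) x₀ := by
    intro x₀
    have hK : IsCompact (closedBall x₀ 1 ×ˢ uIcc (0:ℝ) 1) :=
      (isCompact_closedBall x₀ 1).prod isCompact_uIcc
    obtain ⟨C, hC⟩ := hK.exists_bound_of_continuousOn hDcont.continuousOn
    apply intervalIntegral.hasFDerivAt_integral_of_dominated_of_fderiv_le (s := ball x₀ 1) (bound := fun _ => C)
      (ball_mem_nhds x₀ zero_lt_one)
    · exact Filter.Eventually.of_forall fun x =>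
        (hFcont.comp (Continuous.prodMk_right x)).aestronglyMeasurable
    · exact (hFcont.comp (Continuous.prodMk_right x₀)).intervalIntegrable 0 1
    · exact (hDcont.comp (Continuous.prodMk_right x₀)).aestronglyMeasurable
    · refine Filter.Eventually.of_forall fun t ht x hx => hC (x, t) ?_
      exact ⟨ball_subset_closedBall hx, uIoc_subset_uIcc ht⟩
    · exact intervalIntegrable_const
    · exact Filter.Eventually.of_forall fun t ht x _ => hder t x
  -- evaluate the derivative along `x`
  have hval : ∀ x : EuclideanSpace ℝ (Fin n), (∫ t in (0:ℝ)..1, D x t) x = b' x (X x) := by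
    intro x
    have hint : ∀ v : EuclideanSpace ℝ (Fin n), IntervalIntegrable (fun t => D x t) volume 0 1 :=
      fun v => (hDcont.comp (Continuous.prodMk_right x)).intervalIntegrable 0 1
    have happ : (∫ t in (0:ℝ)..1, D x t) x = ∫ t in (0:ℝ)..1, D x t x := by
      rw [intervalIntegral.integral_of_le zero_le_one,
        intervalIntegral.integral_of_le zero_le_one]
      exact ContinuousLinearMap.integral_apply ((hint x).1) x
    rw [happ]
    -- FTC for `t ↦ t * b' x (X (t • x))`
    have hprod : ∀ t : ℝ, HasDerivAt (fun s : ℝ => s * b' x (X (s • x))) (D x t x) t := by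
      intro t
      have hc : HasDerivAt (fun s : ℝ => b' x (X (s • x)))
          (b' x (fderiv ℝ X (t • x) x)) t := by
        have h1 : HasDerivAt (fun s : ℝ => s • x) x t := by simpa using (hasDerivAt_id t).smul_const x
        have h2 : HasDerivAt (fun s : ℝ => X (s • x)) (fderiv ℝ X (t • x) x) t :=
          ((hXd (t • x)).hasFDerivAt).comp_hasDerivAt t h1
        exact ((b' x).hasFDerivAt).comp_hasDerivAt t h2
      have := (hasDerivAt_id t).mul hc
      rw [show D x t x = 1 * b' x (X (t • x)) + id t * b' x (fderiv ℝ X (t • x) x) by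
        simp [hDdef, mul_comm, mul_add, add_comm]]
      exact this
    have hcont' : Continuous fun t : ℝ => D x t x :=
      (hDcont.comp (Continuous.prodMk_right x)).clm_apply continuous_const
    have := intervalIntegral.integral_eq_sub_of_hasDerivAt
      (f := fun s : ℝ => s * b' x (X (s • x))) (f' := fun t => D x t x)
      (fun t _ => hprod t) (hcont'.intervalIntegrable 0 1)
    rw [this]
    simp
  refine ⟨H, ?_, ?_, ?_⟩
  · rw [contDiff_one_iff_fderiv]
    have hfd : fderiv ℝ H = fun x => ∫ t in (0:ℝ)..1, D x t :=
      funext fun x => (hΦ x).fderiv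
    constructor
    · exact fun x => (hΦ x).differentiableAt
    · rw [hfd]
      exact continuous_parametric_intervalIntegral_of_continuous' (f := D) hDcont 0 1
  · simp [hHdef]
  · intro x
    rw [(hΦ x).fderiv]
    exact hval x

end Stmt13Aux


/-- Unique right geometric decomposition `X = ∇ᵇᴿH + u`
(`∇ᵇᴿH = B∇H`) with `H(0) = 0` and `b(x, u(x)) = 0`; moreover
`H(x) = ∫₀¹ (1/t) b(tx, X(tx)) dt`. -/
theorem stmt_13 {n : ℕ}
    (b : EuclideanSpace ℝ (Fin n) →ₗ[ℝ] EuclideanSpace ℝ (Fin n) →ₗ[ℝ] ℝ)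
    (hL : ∀ x, (∀ y, b x y = 0) → x = 0)
    (hR : ∀ y, (∀ x, b x y = 0) → y = 0)
    (B : EuclideanSpace ℝ (Fin n) ≃ₗ[ℝ] EuclideanSpace ℝ (Fin n))
    (hB : ∀ x y, (inner ℝ x y : ℝ) = b x (B y))
    (X : EuclideanSpace ℝ (Fin n) → EuclideanSpace ℝ (Fin n))
    (hX : ContDiff ℝ 1 X) :
    (∃! p : (EuclideanSpace ℝ (Fin n) → ℝ) ×
        (EuclideanSpace ℝ (Fin n) → EuclideanSpace ℝ (Fin n)),
      ContDiff ℝ 1 p.1 ∧ p.1 0 = 0 ∧ Continuous p.2 ∧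
        (∀ x, b x (p.2 x) = 0) ∧ (∀ x, X x = B (gradient p.1 x) + p.2 x)) ∧
    (∀ p : (EuclideanSpace ℝ (Fin n) → ℝ) ×
        (EuclideanSpace ℝ (Fin n) → EuclideanSpace ℝ (Fin n)),
      (ContDiff ℝ 1 p.1 ∧ p.1 0 = 0 ∧ Continuous p.2 ∧
        (∀ x, b x (p.2 x) = 0) ∧ (∀ x, X x = B (gradient p.1 x) + p.2 x)) →
      ∀ x, p.1 x = ∫ t in (0:ℝ)..1, (1 / t) * b (t • x) (X (t • x))) := by
  have hgradlem : ∀ (f : EuclideanSpace ℝ (Fin n) → ℝ) (x v : EuclideanSpace ℝ (Fin n)),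
      (inner ℝ (gradient f x) v : ℝ) = fderiv ℝ f x v := fun f x v =>
    InnerProductSpace.toDual_symm_apply
  -- the "moreover" clause, proved for arbitrary admissible pairs
  have key2 : ∀ p : (EuclideanSpace ℝ (Fin n) → ℝ) ×
        (EuclideanSpace ℝ (Fin n) → EuclideanSpace ℝ (Fin n)),
      (ContDiff ℝ 1 p.1 ∧ p.1 0 = 0 ∧ Continuous p.2 ∧
        (∀ x, b x (p.2 x) = 0) ∧ (∀ x, X x = B (gradient p.1 x) + p.2 x)) →
      ∀ x, p.1 x = ∫ t in (0:ℝ)..1, (1 / t) * b (t • x) (X (t • x)) := by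
    rintro ⟨H₁, u₁⟩ ⟨h1, h0, hu, hb0, heqn⟩ x
    have hdiff : Differentiable ℝ H₁ := h1.differentiable one_ne_zero
    have hfc : Continuous (fderiv ℝ H₁) := (contDiff_one_iff_fderiv.mp h1).2
    have hder : ∀ t : ℝ, HasDerivAt (fun s : ℝ => H₁ (s • x)) (fderiv ℝ H₁ (t • x) x) t := by
      intro t
      have h1' : HasDerivAt (fun s : ℝ => s • x) x t := by
        simpa using (hasDerivAt_id t).smul_const x
      exact ((hdiff (t • x)).hasFDerivAt).comp_hasDerivAt t h1'
    have hcont : Continuous fun t : ℝ => fderiv ℝ H₁ (t • x) x :=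
      (hfc.comp (continuous_id.smul continuous_const)).clm_apply continuous_const
    have hFTC := intervalIntegral.integral_eq_sub_of_hasDerivAt
      (f := fun s : ℝ => H₁ (s • x)) (fun t _ => hder t) (hcont.intervalIntegrable 0 1)
    have heval : ∀ t : ℝ, t ≠ 0 →
        fderiv ℝ H₁ (t • x) x = (1 / t) * b (t • x) (X (t • x)) := by
      intro t ht
      have h2 : b (t • x) (X (t • x)) = fderiv ℝ H₁ (t • x) (t • x) := by
        rw [heqn (t • x), map_add, hb0, add_zero, ← hB, real_inner_comm, hgradlem]
      have h3 : fderiv ℝ H₁ (t • x) (t • x) = t * fderiv ℝ H₁ (t • x) x := by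
        simp
      rw [h2, h3]
      field_simp
    show H₁ x = _
    calc H₁ x = H₁ ((1:ℝ) • x) - H₁ ((0:ℝ) • x) := by
          rw [one_smul, zero_smul, show H₁ 0 = 0 from h0, sub_zero]
      _ = ∫ t in (0:ℝ)..1, fderiv ℝ H₁ (t • x) x := hFTC.symm
      _ = ∫ t in (0:ℝ)..1, (1 / t) * b (t • x) (X (t • x)) := by
          apply intervalIntegral.integral_congr_ae
          refine Filter.Eventually.of_forall fun t ht => ?_
          have htne : t ≠ 0 := by
            rcases Set.mem_uIoc.mp ht with h | h
            · exact ne_of_gt h.1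
            · exact absurd (h.1.trans_le h.2) (by norm_num)
          exact heval t htne
  -- existence
  obtain ⟨H, hH1, hH0, hHd⟩ := stmt13key (stmt13clm2 b) X hX
  have hfc : Continuous (fderiv ℝ H) := (contDiff_one_iff_fderiv.mp hH1).2
  have hgc : Continuous fun x => gradient H x := by
    simp only [gradient]
    exact (InnerProductSpace.toDual ℝ _).symm.continuous.comp hfc
  have hBc : Continuous fun y : EuclideanSpace ℝ (Fin n) => B y :=
    B.toLinearMap.continuous_of_finiteDimensional
  set u : EuclideanSpace ℝ (Fin n) → EuclideanSpace ℝ (Fin n) :=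
    fun x => X x - B (gradient H x) with hudef
  have huc : Continuous u := hX.continuous.sub (hBc.comp hgc)
  have hbu : ∀ x, b x (u x) = 0 := by
    intro x
    have h1 : b x (B (gradient H x)) = fderiv ℝ H x x := by
      rw [← hB, real_inner_comm, hgradlem]
    have h2 : fderiv ℝ H x x = b x (X x) := by rw [hHd x, stmt13clm2_apply]
    simp only [hudef, map_sub, h1, h2, sub_self]
  have heq : ∀ x, X x = B (gradient H x) + u x := by
    intro x
    simp only [hudef, add_sub_cancel]
  have hprop : ContDiff ℝ 1 (H, u).1 ∧ (H, u).1 0 = 0 ∧ Continuous (H, u).2 ∧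
      (∀ x, b x ((H, u).2 x) = 0) ∧
      (∀ x, X x = B (gradient (H, u).1 x) + (H, u).2 x) :=
    ⟨hH1, hH0, huc, hbu, heq⟩
  refine ⟨⟨(H, u), hprop, ?_⟩, key2⟩
  rintro ⟨H₂, u₂⟩ hq
  have e1 : H₂ = H := funext fun x => (key2 _ hq x).trans (key2 (H, u) hprop x).symm
  have e2 : u₂ = u := by
    funext x
    have h3 := hq.2.2.2.2 x
    rw [e1] at h3
    have : u₂ x = X x - B (gradient H x) := by rw [h3]; abel
    rw [this]
  exact Prod.ext e1 e2
end

section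
/- Let X be a C¹ vector field on ℝⁿ. Then there exists a unique decomposition X(x) = ∇H(x) + u(x), where H : ℝⁿ → ℝ is C¹ with H(0) = 0 and ∇H its Euclidean gradient, and u is a continuous vector field with ⟨x, u(x)⟩ = 0 for all x ∈ ℝⁿ. Explicitly, H(x) = ∫₀¹ ⟨x, X(tx)⟩ dt. -/
open MeasureTheory Metric Set intervalIntegral InnerProductSpace

noncomputable section PresnovAux

variable {n : ℕ}

/-- The candidate `x`-derivative of the integrand `fun x => ⟪x, X (t • x)⟫`. -/
private def presnovFd (X : EuclideanSpace ℝ (Fin n) → EuclideanSpace ℝ (Fin n))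
    (x : EuclideanSpace ℝ (Fin n)) (t : ℝ) : EuclideanSpace ℝ (Fin n) →L[ℝ] ℝ :=
  innerSL ℝ (X (t • x)) + t • ((innerSL ℝ x).comp (fderiv ℝ X (t • x)))

private lemma presnovFd_hasFDerivAt
    {X : EuclideanSpace ℝ (Fin n) → EuclideanSpace ℝ (Fin n)} (hX : ContDiff ℝ 1 X)
    (t : ℝ) (x : EuclideanSpace ℝ (Fin n)) :
    HasFDerivAt (fun y : EuclideanSpace ℝ (Fin n) => (inner ℝ y (X (t • y)) : ℝ))
      (presnovFd X x t) x := by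
  have hs : HasFDerivAt (fun y : EuclideanSpace ℝ (Fin n) => t • y)
      (t • ContinuousLinearMap.id ℝ (EuclideanSpace ℝ (Fin n))) x :=
    (t • ContinuousLinearMap.id ℝ (EuclideanSpace ℝ (Fin n))).hasFDerivAt
  have h2 : HasFDerivAt (fun y : EuclideanSpace ℝ (Fin n) => X (t • y))
      ((fderiv ℝ X (t • x)).comp (t • ContinuousLinearMap.id ℝ (EuclideanSpace ℝ (Fin n)))) x :=
    HasFDerivAt.comp x ((hX.differentiable one_ne_zero) (t • x)).hasFDerivAt hs
  have h := (hasFDerivAt_id x).inner ℝ h2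
  refine h.congr_fderiv ?_
  ext v
  simp only [presnovFd, ContinuousLinearMap.add_apply, ContinuousLinearMap.smul_apply,
    ContinuousLinearMap.comp_apply, innerSL_apply_apply, fderivInnerCLM_apply,
    ContinuousLinearMap.prod_apply, ContinuousLinearMap.coe_id', id_eq, _root_.map_smul,
    inner_smul_right, smul_eq_mul]
  rw [real_inner_comm (X (t • x)) v]
  ring

private lemma presnovFd_continuous
    {X : EuclideanSpace ℝ (Fin n) → EuclideanSpace ℝ (Fin n)} (hX : ContDiff ℝ 1 X) :
    Continuous (fun p : EuclideanSpace ℝ (Fin n) × ℝ => presnovFd X p.1 p.2) := by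
  have hDX : Continuous (fderiv ℝ X) := hX.continuous_fderiv one_ne_zero
  have hc : Continuous fun p : EuclideanSpace ℝ (Fin n) × ℝ => X (p.2 • p.1) :=
    hX.continuous.comp' (continuous_snd.smul continuous_fst)
  have c1 : Continuous fun p : EuclideanSpace ℝ (Fin n) × ℝ => innerSL ℝ (X (p.2 • p.1)) :=
    (innerSL ℝ).continuous.comp' hc
  have c2 : Continuous fun p : EuclideanSpace ℝ (Fin n) × ℝ =>
      (innerSL ℝ p.1 : EuclideanSpace ℝ (Fin n) →L[ℝ] ℝ) :=
    (innerSL ℝ).continuous.comp' continuous_fst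
  have c3 : Continuous fun p : EuclideanSpace ℝ (Fin n) × ℝ => fderiv ℝ X (p.2 • p.1) :=
    hDX.comp' (continuous_snd.smul continuous_fst)
  exact c1.add (continuous_snd.smul (c2.clm_comp c3))

end PresnovAux

/-- Presnov decomposition: Every `C¹` vector field on ℝⁿ splits
uniquely as `X = ∇H + u` with `H(0) = 0` and `⟨x, u(x)⟩ = 0` for all `x`;
explicitly `H(x) = ∫₀¹ ⟨x, X(tx)⟩ dt`. -/
theorem stmt_14 {n : ℕ}
    (X : EuclideanSpace ℝ (Fin n) → EuclideanSpace ℝ (Fin n))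
    (hX : ContDiff ℝ 1 X) :
    (∃! p : (EuclideanSpace ℝ (Fin n) → ℝ) ×
        (EuclideanSpace ℝ (Fin n) → EuclideanSpace ℝ (Fin n)),
      ContDiff ℝ 1 p.1 ∧ p.1 0 = 0 ∧ Continuous p.2 ∧
        (∀ x, (inner ℝ x (p.2 x) : ℝ) = 0) ∧ (∀ x, X x = gradient p.1 x + p.2 x)) ∧
    (∀ p : (EuclideanSpace ℝ (Fin n) → ℝ) ×
        (EuclideanSpace ℝ (Fin n) → EuclideanSpace ℝ (Fin n)),
      (ContDiff ℝ 1 p.1 ∧ p.1 0 = 0 ∧ Continuous p.2 ∧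
        (∀ x, (inner ℝ x (p.2 x) : ℝ) = 0) ∧ (∀ x, X x = gradient p.1 x + p.2 x)) →
      ∀ x, p.1 x = ∫ t in (0:ℝ)..1, (inner ℝ x (X (t • x)) : ℝ)) := by
  have hXc : Continuous X := hX.continuous
  -- the uniqueness formula (second bullet) first
  have key2 : ∀ p : (EuclideanSpace ℝ (Fin n) → ℝ) ×
        (EuclideanSpace ℝ (Fin n) → EuclideanSpace ℝ (Fin n)),
      (ContDiff ℝ 1 p.1 ∧ p.1 0 = 0 ∧ Continuous p.2 ∧
        (∀ x, (inner ℝ x (p.2 x) : ℝ) = 0) ∧ (∀ x, X x = gradient p.1 x + p.2 x)) →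
      ∀ x, p.1 x = ∫ t in (0:ℝ)..1, (inner ℝ x (X (t • x)) : ℝ) := by
    rintro ⟨H₁, u₁⟩ ⟨hH₁, hH₁0, hu₁c, hu₁o, hdec⟩ x
    dsimp only at hH₁ hH₁0 hu₁c hu₁o hdec ⊢
    have hdiffH₁ : Differentiable ℝ H₁ := hH₁.differentiable one_ne_zero
    have hgrad : ∀ y, gradient H₁ y = X y - u₁ y := by
      intro y; rw [hdec y]; abel
    have hg' : ∀ t : ℝ, HasDerivAt (fun s : ℝ => H₁ (s • x))
        ((inner ℝ x (X (t • x)) : ℝ) - (inner ℝ x (u₁ (t • x)) : ℝ)) t := by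
      intro t
      have hline : HasDerivAt (fun s : ℝ => s • x) x t := by
        simpa using (hasDerivAt_id t).smul_const x
      have h := (hdiffH₁ (t • x)).hasFDerivAt.comp_hasDerivAt t hline
      have hval : fderiv ℝ H₁ (t • x) x =
          (inner ℝ x (X (t • x)) : ℝ) - (inner ℝ x (u₁ (t • x)) : ℝ) := by
        have h0 : fderiv ℝ H₁ (t • x) x = (inner ℝ (gradient H₁ (t • x)) x : ℝ) :=
          (InnerProductSpace.toDual_symm_apply (𝕜 := ℝ)).symm
        rw [h0, hgrad, real_inner_comm, inner_sub_right]
      rw [← hval]; exact h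
    have hcontX : Continuous fun t : ℝ => (inner ℝ x (X (t • x)) : ℝ) :=
      continuous_const.inner (hXc.comp' (continuous_id.smul continuous_const))
    have hcontu : Continuous fun t : ℝ => (inner ℝ x (u₁ (t • x)) : ℝ) :=
      continuous_const.inner (hu₁c.comp' (continuous_id.smul continuous_const))
    have hFTC : ∫ t in (0:ℝ)..1,
        ((inner ℝ x (X (t • x)) : ℝ) - (inner ℝ x (u₁ (t • x)) : ℝ)) = H₁ x - H₁ 0 := by
      have := intervalIntegral.integral_eq_sub_of_hasDerivAt
        (f := fun s : ℝ => H₁ (s • x))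
        (f' := fun t => (inner ℝ x (X (t • x)) : ℝ) - (inner ℝ x (u₁ (t • x)) : ℝ))
        (a := 0) (b := 1) (fun t _ => hg' t)
        ((hcontX.sub hcontu).intervalIntegrable 0 1)
      simpa using this
    have hcongr : (∫ t in (0:ℝ)..1,
        ((inner ℝ x (X (t • x)) : ℝ) - (inner ℝ x (u₁ (t • x)) : ℝ))) =
        ∫ t in (0:ℝ)..1, (inner ℝ x (X (t • x)) : ℝ) := by
      apply intervalIntegral.integral_congr_ae
      filter_upwards with t ht
      have ht0 : t ≠ 0 := by
        rw [Set.uIoc_of_le (by norm_num : (0:ℝ) ≤ 1)] at ht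
        exact ne_of_gt ht.1
      have h0 : (inner ℝ (t • x) (u₁ (t • x)) : ℝ) = 0 := hu₁o (t • x)
      rw [real_inner_smul_left] at h0
      have hz : (inner ℝ x (u₁ (t • x)) : ℝ) = 0 := by
        rcases mul_eq_zero.1 h0 with h | h
        · exact absurd h ht0
        · exact h
      rw [hz, sub_zero]
    rw [hH₁0, sub_zero] at hFTC
    rw [← hFTC, hcongr]
  -- Existence
  set H : EuclideanSpace ℝ (Fin n) → ℝ :=
    fun x => ∫ t in (0:ℝ)..1, (inner ℝ x (X (t • x)) : ℝ) with hHdef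
  have hFcont : Continuous fun p : EuclideanSpace ℝ (Fin n) × ℝ =>
      (inner ℝ p.1 (X (p.2 • p.1)) : ℝ) :=
    continuous_fst.inner (hXc.comp' (continuous_snd.smul continuous_fst))
  have hderivH : ∀ x₀, HasFDerivAt H (∫ t in (0:ℝ)..1, presnovFd X x₀ t) x₀ := by
    intro x₀
    obtain ⟨C, hC⟩ : ∃ C, ∀ p ∈ (closedBall x₀ 1 ×ˢ Icc (0:ℝ) 1),
        ‖presnovFd X p.1 p.2‖ ≤ C :=
      ((isCompact_closedBall x₀ 1).prod isCompact_Icc).exists_bound_of_continuousOn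
        (presnovFd_continuous hX).continuousOn
    apply hasFDerivAt_integral_of_dominated_of_fderiv_le''
      (F' := fun x t => presnovFd X x t) (bound := fun _ => C) (s := ball x₀ 1) (ball_mem_nhds x₀ one_pos)
    · filter_upwards with x
      exact ((hFcont.comp' (Continuous.prodMk_right x)).aestronglyMeasurable).restrict
    · exact (hFcont.comp' (Continuous.prodMk_right x₀)).intervalIntegrable 0 1
    · exact (((presnovFd_continuous hX).comp'
        (Continuous.prodMk_right x₀)).aestronglyMeasurable).restrict
    · refine (ae_restrict_mem measurableSet_uIoc).mono fun t ht x hx => ?_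
      have ht' : t ∈ Icc (0:ℝ) 1 := by
        rw [Set.uIoc_of_le (by norm_num : (0:ℝ) ≤ 1)] at ht
        exact ⟨ht.1.le, ht.2⟩
      exact hC (x, t) ⟨ball_subset_closedBall hx, ht'⟩
    · exact intervalIntegrable_const
    · filter_upwards with t x _
      exact presnovFd_hasFDerivAt hX t x
  have hHdiff : Differentiable ℝ H := fun x => (hderivH x).differentiableAt
  have hfderivH : fderiv ℝ H = fun x => ∫ t in (0:ℝ)..1, presnovFd X x t :=
    funext fun x => (hderivH x).fderiv
  have hcontfderiv : Continuous fun x : EuclideanSpace ℝ (Fin n) =>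
      ∫ t in (0:ℝ)..1, presnovFd X x t :=
    continuous_parametric_intervalIntegral_of_continuous' (μ := volume)
      (f := fun x t => presnovFd X x t) (by exact presnovFd_continuous hX) 0 1
  have hHC1 : ContDiff ℝ 1 H := by
    rw [contDiff_one_iff_fderiv]
    exact ⟨hHdiff, by rw [hfderivH]; exact hcontfderiv⟩
  have hgradcont : Continuous fun x => gradient H x := by
    have heq : (fun x => gradient H x) =
        fun x => (toDual ℝ (EuclideanSpace ℝ (Fin n))).symm (fderiv ℝ H x) := rfl
    rw [heq, hfderivH]
    exact ((toDual ℝ (EuclideanSpace ℝ (Fin n))).symm.continuous).comp' hcontfderiv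
  -- radial identity ⟪x, ∇H x⟫ = ⟪x, X x⟫
  have hradial : ∀ x, (inner ℝ x (gradient H x) : ℝ) = inner ℝ x (X x) := by
    intro x
    have h1 : (inner ℝ x (gradient H x) : ℝ) = fderiv ℝ H x x := by
      rw [real_inner_comm]
      exact InnerProductSpace.toDual_symm_apply (𝕜 := ℝ)
    have hFdint : IntervalIntegrable (fun t => presnovFd X x t) volume 0 1 :=
      (((presnovFd_continuous hX).comp' (Continuous.prodMk_right x))).intervalIntegrable 0 1
    have h2 : fderiv ℝ H x x = ∫ t in (0:ℝ)..1, presnovFd X x t x := by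
      rw [congrFun hfderivH x]
      exact ContinuousLinearMap.intervalIntegral_apply hFdint x
    have hψ : ∀ t : ℝ, HasDerivAt (fun s : ℝ => s * (inner ℝ x (X (s • x)) : ℝ))
        (presnovFd X x t x) t := by
      intro t
      have hline : HasDerivAt (fun s : ℝ => s • x) x t := by
        simpa using (hasDerivAt_id t).smul_const x
      have hXl : HasDerivAt (fun s : ℝ => X (s • x)) (fderiv ℝ X (t • x) x) t :=
        ((hX.differentiable one_ne_zero) (t • x)).hasFDerivAt.comp_hasDerivAt t hline
      have hinner : HasDerivAt (fun s : ℝ => (inner ℝ x (X (s • x)) : ℝ))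
          ((inner ℝ x (fderiv ℝ X (t • x) x) : ℝ)) t := by
        have := (hasDerivAt_const t x).inner ℝ hXl
        simpa using this
      have hmul := (hasDerivAt_id t).mul hinner
      simp only [id_eq, one_mul] at hmul
      refine hmul.congr_deriv ?_
      simp only [presnovFd, ContinuousLinearMap.add_apply, ContinuousLinearMap.smul_apply,
        ContinuousLinearMap.comp_apply, innerSL_apply_apply, smul_eq_mul]
      rw [real_inner_comm]
    have h3 : (∫ t in (0:ℝ)..1, presnovFd X x t x) = (inner ℝ x (X x) : ℝ) := by
      have hcont' : Continuous fun t : ℝ => presnovFd X x t x :=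
        (((presnovFd_continuous hX).comp' (Continuous.prodMk_right x))).clm_apply continuous_const
      have := intervalIntegral.integral_eq_sub_of_hasDerivAt
        (f := fun s : ℝ => s * (inner ℝ x (X (s • x)) : ℝ))
        (f' := fun t => presnovFd X x t x) (a := 0) (b := 1)
        (fun t _ => hψ t) (hcont'.intervalIntegrable 0 1)
      simpa using this
    rw [h1, h2, h3]
  set u : EuclideanSpace ℝ (Fin n) → EuclideanSpace ℝ (Fin n) :=
    fun x => X x - gradient H x with hudef
  have hH0 : H 0 = 0 := by
    have hz : ∀ t : ℝ, (inner ℝ (0 : EuclideanSpace ℝ (Fin n)) (X (t • (0:EuclideanSpace ℝ (Fin n)))) : ℝ) = 0 :=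
      fun t => inner_zero_left _
    simp only [hHdef, hz, intervalIntegral.integral_zero]
  have hprops : ContDiff ℝ 1 H ∧ H 0 = 0 ∧ Continuous u ∧
      (∀ x, (inner ℝ x (u x) : ℝ) = 0) ∧ (∀ x, X x = gradient H x + u x) := by
    refine ⟨hHC1, hH0, hXc.sub hgradcont, fun x => ?_, fun x => by simp [hudef]⟩
    simp only [hudef, inner_sub_right, hradial x, sub_self]
  refine ⟨⟨(H, u), hprops, ?_⟩, key2⟩
  rintro ⟨H₂, u₂⟩ hq
  have h1 : H₂ = H := funext fun x => key2 (H₂, u₂) hq x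
  have h2 : u₂ = u := by
    funext x
    have hd := hq.2.2.2.2 x
    have h' : u₂ x = X x - gradient H₂ x := by rw [hd]; abel
    rw [h', h1]
  rw [h1, h2]
end

section
/- Let b be a nondegenerate bilinear form on ℝⁿ, X a C¹ vector field, and let X = ∇ᵇᴿH + u and X = ∇ᵇᴸH⋆ + u⋆ be its right and left geometric decompositions with H(0) = H⋆(0) = 0, b(x,u(x)) = 0 and b(u⋆(x),x) = 0 for all x. Then H⋆(x) = H(x) + 2∫₀¹ 𝒜_b(X(tx), x) dt for all x, where 𝒜_b(x,y) := ½(b(x,y) − b(y,x)) is the skew-symmetric part of b. -/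
open InnerProductSpace

lemma cont_grad_inner {n : ℕ} (F : EuclideanSpace ℝ (Fin n) → ℝ) (hF : ContDiff ℝ 1 F)
    (x : EuclideanSpace ℝ (Fin n)) :
    Continuous fun t : ℝ => (inner ℝ (gradient F (t • x)) x : ℝ) := by
  have hg : Continuous fun y => gradient F y :=
    ((toDual ℝ (EuclideanSpace ℝ (Fin n))).symm.continuous.comp (hF.continuous_fderiv one_ne_zero))
  exact (Continuous.inner (hg.comp (by continuity)) continuous_const)

lemma line_int {n : ℕ} (F : EuclideanSpace ℝ (Fin n) → ℝ) (hF : ContDiff ℝ 1 F)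
    (hF0 : F 0 = 0) (x : EuclideanSpace ℝ (Fin n)) :
    F x = ∫ t in (0:ℝ)..1, (inner ℝ (gradient F (t • x)) x : ℝ) := by
  have hderiv : ∀ t : ℝ, HasDerivAt (fun s : ℝ => F (s • x))
      (inner ℝ (gradient F (t • x)) x : ℝ) t := by
    intro t
    have hg : HasGradientAt F (gradient F (t • x)) (t • x) :=
      (hF.differentiable one_ne_zero (t • x)).hasGradientAt
    have hfd := hasGradientAt_iff_hasFDerivAt.mp hg
    have hsm : HasDerivAt (fun s : ℝ => s • x) x t := by
      simpa using (hasDerivAt_id t).smul_const x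
    have h3 : HasDerivAt (fun s : ℝ => F (s • x)) _ t := hfd.comp_hasDerivAt t hsm
    simpa using h3
  have := intervalIntegral.integral_eq_sub_of_hasDerivAt
    (f := fun s : ℝ => F (s • x)) (fun t _ => hderiv t)
    ((cont_grad_inner F hF x).intervalIntegrable 0 1)
  simpa [hF0] using this.symm



/-- Relation between the potentials of the right and left
geometric decompositions: `H⋆(x) = H(x) + 2∫₀¹ 𝒜_b(X(tx), x) dt`, where
`𝒜_b(x,y) = ½(b(x,y) − b(y,x))`. -/
theorem stmt_15 {n : ℕ}
    (b : EuclideanSpace ℝ (Fin n) →ₗ[ℝ] EuclideanSpace ℝ (Fin n) →ₗ[ℝ] ℝ)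
    (hL : ∀ x, (∀ y, b x y = 0) → x = 0)
    (hR : ∀ y, (∀ x, b x y = 0) → y = 0)
    (B : EuclideanSpace ℝ (Fin n) →ₗ[ℝ] EuclideanSpace ℝ (Fin n))
    (hBbij : Function.Bijective B)
    (hB : ∀ x y, (inner ℝ x y : ℝ) = b x (B y))
    (X : EuclideanSpace ℝ (Fin n) → EuclideanSpace ℝ (Fin n))
    (hX : ContDiff ℝ 1 X)
    (H : EuclideanSpace ℝ (Fin n) → ℝ)
    (u : EuclideanSpace ℝ (Fin n) → EuclideanSpace ℝ (Fin n))
    (hHC : ContDiff ℝ 1 H) (hH0 : H 0 = 0) (hu : ∀ x, b x (u x) = 0)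
    (hdecR : ∀ x, X x = B (gradient H x) + u x)
    (Hstar : EuclideanSpace ℝ (Fin n) → ℝ)
    (ustar : EuclideanSpace ℝ (Fin n) → EuclideanSpace ℝ (Fin n))
    (hHstarC : ContDiff ℝ 1 Hstar) (hHstar0 : Hstar 0 = 0)
    (hustar : ∀ x, b (ustar x) x = 0)
    (hdecL : ∀ x, X x = LinearMap.adjoint B (gradient Hstar x) + ustar x) :
    ∀ x, Hstar x = H x +
      2 * ∫ t in (0:ℝ)..1, (1 / 2) * (b (X (t • x)) x - b x (X (t • x))) := by
  intro x
  have h1 : ∀ t : ℝ, t ≠ 0 → b x (X (t • x)) = (inner ℝ x (gradient H (t • x)) : ℝ) := by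
    intro t ht
    have hu0 : b x (u (t • x)) = 0 := by
      have := hu (t • x)
      rw [map_smul, LinearMap.smul_apply, smul_eq_mul] at this
      exact (mul_eq_zero.mp this).resolve_left ht
    rw [hdecR (t • x), map_add, hu0, hB]
    ring
  have h2 : ∀ t : ℝ, t ≠ 0 → b (X (t • x)) x = (inner ℝ (gradient Hstar (t • x)) x : ℝ) := by
    intro t ht
    have hu0 : b (ustar (t • x)) x = 0 := by
      have := hustar (t • x)
      rw [map_smul] at this
      rw [smul_eq_mul] at this
      exact (mul_eq_zero.mp this).resolve_left ht
    obtain ⟨z, hz⟩ := hBbij.2 x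
    rw [hdecL (t • x), map_add, LinearMap.add_apply, hu0, ← hz, ← hB,
      LinearMap.adjoint_inner_left]
    ring
  have hint : ∀ t : ℝ, t ≠ 0 → (1/2 : ℝ) * (b (X (t • x)) x - b x (X (t • x)))
      = (1/2 : ℝ) * ((inner ℝ (gradient Hstar (t • x)) x : ℝ)
          - (inner ℝ (gradient H (t • x)) x : ℝ)) := by
    intro t ht
    rw [h2 t ht, h1 t ht, real_inner_comm x (gradient H (t • x))]
  have h0 : ∀ᵐ t : ℝ, t ≠ 0 := by
    refine MeasureTheory.ae_iff.mpr ?_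
    simpa using MeasureTheory.measure_singleton (0 : ℝ)
  rw [intervalIntegral.integral_congr_ae (h0.mono fun t ht _ => hint t ht)]
  rw [intervalIntegral.integral_const_mul,
    intervalIntegral.integral_sub ((cont_grad_inner Hstar hHstarC x).intervalIntegrable 0 1)
      ((cont_grad_inner H hHC x).intervalIntegrable 0 1),
    ← line_int H hHC hH0 x, ← line_int Hstar hHstarC hHstar0 x]
  ring
end

section
/- Consider the Rikitake vector field X(x,y,z) = (−μx + yz, −μy + x(z−a), 1 − xy) on ℝ³ equipped with the Minkowski product b((x,y,z),(x',y',z')) = xx' + yy' − zz'. Then X decomposes uniquely as X = ∇_{2,1}H + u with H(0)=0 and b(u(p),p)=0 for all p, where H(x,y,z) = −(μ/2)x² − (μ/2)y² + xyz − (a/2)xy − z and u(x,y,z) = (a/2)(y, −x, 0). In particular, if a = 0 then u ≡ 0 and X is a Minkowski gradient vector field. -/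
open InnerProductSpace

noncomputable abbrev ES := EuclideanSpace ℝ (Fin 3)

lemma fderiv_eq_inner_grad (f : ES → ℝ) (x v : ES) :
    fderiv ℝ f x v = ⟪gradient f x, v⟫_ℝ := by
  rw [gradient]
  simp [InnerProductSpace.toDual_apply_apply]

lemma inner_three (x y : ES) : ⟪x, y⟫_ℝ = x 0 * y 0 + x 1 * y 1 + x 2 * y 2 := by
  simp [PiLp.inner_apply, Fin.sum_univ_three]
  ring

noncomputable def Gv (μ a : ℝ) (p : ES) : ES :=
  (WithLp.equiv 2 (Fin 3 → ℝ)).symm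
    ![-μ * p 0 + p 1 * p 2 - (a/2) * p 1,
      -μ * p 1 + p 0 * p 2 - (a/2) * p 0,
      p 0 * p 1 - 1]

lemma Gv_apply (μ a : ℝ) (p : ES) :
    Gv μ a p 0 = -μ * p 0 + p 1 * p 2 - (a/2) * p 1 ∧
    Gv μ a p 1 = -μ * p 1 + p 0 * p 2 - (a/2) * p 0 ∧
    Gv μ a p 2 = p 0 * p 1 - 1 := by
  refine ⟨?_, ?_, ?_⟩ <;> simp [Gv, WithLp.equiv_symm_apply, PiLp.toLp_apply]

lemma hasGradH0 (μ a : ℝ) (p : ES) :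
    HasGradientAt (fun p : ES => -(μ / 2) * (p 0) ^ 2 - (μ / 2) * (p 1) ^ 2 +
        p 0 * p 1 * p 2 - (a / 2) * (p 0 * p 1) - p 2) (Gv μ a p) p := by
  have h0 : HasFDerivAt (fun p : ES => p 0) (EuclideanSpace.proj (0:Fin 3) : ES →L[ℝ] ℝ) p := by
    simpa using (EuclideanSpace.proj (0:Fin 3) : ES →L[ℝ] ℝ).hasFDerivAt (x := p)
  have h1 : HasFDerivAt (fun p : ES => p 1) (EuclideanSpace.proj (1:Fin 3) : ES →L[ℝ] ℝ) p := by
    simpa using (EuclideanSpace.proj (1:Fin 3) : ES →L[ℝ] ℝ).hasFDerivAt (x := p)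
  have h2 : HasFDerivAt (fun p : ES => p 2) (EuclideanSpace.proj (2:Fin 3) : ES →L[ℝ] ℝ) p := by
    simpa using (EuclideanSpace.proj (2:Fin 3) : ES →L[ℝ] ℝ).hasFDerivAt (x := p)
  have hd := ((((((h0.mul h0)).const_mul (-(μ/2))).sub (((h1.mul h1)).const_mul (μ/2))).add
      ((h0.mul h1).mul h2)).sub ((h0.mul h1).const_mul (a/2))).sub h2
  have hd' := hd.congr_of_eventuallyEq (Filter.Eventually.of_forall (fun q => by simp only [Pi.mul_apply, Pi.sub_apply, Pi.add_apply]; ring) :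
    (fun p : ES => -(μ / 2) * (p 0) ^ 2 - (μ / 2) * (p 1) ^ 2 +
        p 0 * p 1 * p 2 - (a / 2) * (p 0 * p 1) - p 2) =ᶠ[nhds p] _)
  rw [hasGradientAt_iff_hasFDerivAt]
  refine hd'.congr_fderiv ?_
  ext v
  simp [Gv, InnerProductSpace.toDual_apply_apply, PiLp.inner_apply, Fin.sum_univ_three,
    PiLp.proj_apply, smul_eq_mul, WithLp.equiv_symm_apply, PiLp.toLp_apply]
  ring

lemma contDiff_expr (μ a : ℝ) : ContDiff ℝ 1 (fun p : ES => -(μ / 2) * (p 0) ^ 2 - (μ / 2) * (p 1) ^ 2 +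
        p 0 * p 1 * p 2 - (a / 2) * (p 0 * p 1) - p 2) := by
  have c0 : ContDiff ℝ 1 (fun p : ES => p 0) := by
    simpa using (EuclideanSpace.proj (0:Fin 3) : ES →L[ℝ] ℝ).contDiff
  have c1 : ContDiff ℝ 1 (fun p : ES => p 1) := by
    simpa using (EuclideanSpace.proj (1:Fin 3) : ES →L[ℝ] ℝ).contDiff
  have c2 : ContDiff ℝ 1 (fun p : ES => p 2) := by
    simpa using (EuclideanSpace.proj (2:Fin 3) : ES →L[ℝ] ℝ).contDiff
  exact (((contDiff_const.mul (c0.pow 2)).sub (contDiff_const.mul (c1.pow 2))).add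
      ((c0.mul c1).mul c2)).sub (contDiff_const.mul (c0.mul c1)) |>.sub c2

lemma key_const (F : ES → ℝ) (hF : ContDiff ℝ 1 F)
    (hrad : ∀ q : ES, fderiv ℝ F q q = 0) (hF0 : F 0 = 0) : ∀ p, F p = 0 := by
  intro p
  have hdF : Differentiable ℝ F := hF.differentiable (by norm_num)
  set φ : ℝ → ℝ := fun t => fderiv ℝ F (t • p) p with hφ
  have hg : ∀ t : ℝ, HasDerivAt (fun t : ℝ => F (t • p)) (φ t) t := by
    intro t
    exact (hdF (t • p)).hasFDerivAt.comp_hasDerivAt t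
      (by simpa using (hasDerivAt_id t).smul_const p)
  have hφcont : Continuous φ := by
    have h1 : Continuous (fderiv ℝ F) := hF.continuous_fderiv (by norm_num)
    exact (h1.comp (continuous_id.smul continuous_const)).clm_apply continuous_const
  have hφne : ∀ t : ℝ, t ≠ 0 → φ t = 0 := by
    intro t ht
    have h2 : (fderiv ℝ F (t • p)) (t • p) = 0 := hrad _
    rw [map_smul, smul_eq_mul] at h2
    simpa [hφ] using (mul_eq_zero.mp h2).resolve_left ht
  have hφ0 : ∀ t, φ t = 0 := by
    have := Continuous.ext_on (dense_compl_singleton (0:ℝ)) hφcont continuous_const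
      (fun t ht => hφne t ht)
    exact fun t => congrFun this t
  have hconst := is_const_of_deriv_eq_zero (f := fun t : ℝ => F (t • p))
    (fun t => (hg t).differentiableAt) (fun t => by rw [(hg t).deriv, hφ0]) 1 0
  simpa [hF0] using hconst


/-- The Rikitake vector field
`X(x,y,z) = (−μx + yz, −μy + x(z−a), 1 − xy)` on Minkowski `ℝ^{2,1}` decomposes
uniquely as `X = ∇_{2,1}H + u` (`∇_{2,1}H = E∇H`, `E = diag(1,1,−1)`) with
`H(0) = 0` and `b(u(p), p) = 0`, where
`H(x,y,z) = −(μ/2)x² − (μ/2)y² + xyz − (a/2)xy − z` and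
`u(x,y,z) = (a/2)(y, −x, 0)`. In particular if `a = 0` then `u ≡ 0`, so `X` is
a Minkowski gradient vector field. -/
theorem stmt_19 (μ a : ℝ) (hμ : 0 ≤ μ) (ha : 0 ≤ a)
    (b : EuclideanSpace ℝ (Fin 3) → EuclideanSpace ℝ (Fin 3) → ℝ)
    (hb : ∀ p q, b p q = p 0 * q 0 + p 1 * q 1 - p 2 * q 2)
    (Eop : EuclideanSpace ℝ (Fin 3) → EuclideanSpace ℝ (Fin 3))
    (hEop : ∀ p, Eop p 0 = p 0 ∧ Eop p 1 = p 1 ∧ Eop p 2 = -(p 2))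
    (X : EuclideanSpace ℝ (Fin 3) → EuclideanSpace ℝ (Fin 3))
    (hX : ∀ p, X p 0 = -μ * p 0 + p 1 * p 2 ∧
               X p 1 = -μ * p 1 + p 0 * (p 2 - a) ∧
               X p 2 = 1 - p 0 * p 1)
    (H0 : EuclideanSpace ℝ (Fin 3) → ℝ)
    (hH0 : ∀ p, H0 p = -(μ / 2) * (p 0) ^ 2 - (μ / 2) * (p 1) ^ 2 +
        p 0 * p 1 * p 2 - (a / 2) * (p 0 * p 1) - p 2)
    (u0 : EuclideanSpace ℝ (Fin 3) → EuclideanSpace ℝ (Fin 3))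
    (hu0 : ∀ p, u0 p 0 = (a / 2) * p 1 ∧ u0 p 1 = -((a / 2) * p 0) ∧
        u0 p 2 = 0) :
    (ContDiff ℝ 1 H0 ∧ H0 0 = 0 ∧ Continuous u0 ∧ (∀ p, b (u0 p) p = 0) ∧
        (∀ p, X p = Eop (gradient H0 p) + u0 p)) ∧
    (∀ (H : EuclideanSpace ℝ (Fin 3) → ℝ)
        (u : EuclideanSpace ℝ (Fin 3) → EuclideanSpace ℝ (Fin 3)),
      ContDiff ℝ 1 H → H 0 = 0 → Continuous u → (∀ p, b (u p) p = 0) →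
      (∀ p, X p = Eop (gradient H p) + u p) → H = H0 ∧ u = u0) ∧
    (a = 0 → ∀ p, u0 p = 0) := by
  have hH0' : H0 = fun p : ES => -(μ / 2) * (p 0) ^ 2 - (μ / 2) * (p 1) ^ 2 +
        p 0 * p 1 * p 2 - (a / 2) * (p 0 * p 1) - p 2 := funext hH0
  have hgrad : ∀ p : ES, gradient H0 p = Gv μ a p := by
    intro p
    rw [hH0']
    exact (hasGradH0 μ a p).gradient
  -- u0 as explicit function
  have hu0' : u0 = fun p : ES => (WithLp.equiv 2 (Fin 3 → ℝ)).symm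
      ![(a/2) * p 1, -((a/2) * p 0), 0] := by
    funext p
    ext i
    fin_cases i
    · simpa [WithLp.equiv_symm_apply, PiLp.toLp_apply] using (hu0 p).1
    · simpa [WithLp.equiv_symm_apply, PiLp.toLp_apply] using (hu0 p).2.1
    · simpa [WithLp.equiv_symm_apply, PiLp.toLp_apply] using (hu0 p).2.2
  have hcont : Continuous u0 := by
    rw [hu0']
    refine (PiLp.continuous_toLp (p := 2) (β := fun _ : Fin 3 => ℝ)).comp ?_
    refine continuous_pi fun i => ?_
    have c0 : Continuous (fun p : ES => p 0) := by
      simpa using (EuclideanSpace.proj (0:Fin 3) : ES →L[ℝ] ℝ).continuous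
    have c1 : Continuous (fun p : ES => p 1) := by
      simpa using (EuclideanSpace.proj (1:Fin 3) : ES →L[ℝ] ℝ).continuous
    fin_cases i <;> simp <;> fun_prop
  have hborth : ∀ p : ES, b (u0 p) p = 0 := by
    intro p
    rw [hb]
    obtain ⟨h1, h2, h3⟩ := hu0 p
    rw [h1, h2, h3]
    ring
  have hdecomp0 : ∀ p : ES, X p = Eop (gradient H0 p) + u0 p := by
    intro p
    ext i
    obtain ⟨hE1, hE2, hE3⟩ := hEop (gradient H0 p)
    obtain ⟨hX1, hX2, hX3⟩ := hX p
    obtain ⟨hu1, hu2, hu3⟩ := hu0 p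
    obtain ⟨hG1, hG2, hG3⟩ := Gv_apply μ a p
    rw [hgrad p] at hE1 hE2 hE3
    fin_cases i
    · show X p 0 = (Eop (gradient H0 p) + u0 p) 0
      rw [PiLp.add_apply, hgrad p, hE1, hG1, hX1, hu1]; ring
    · show X p 1 = (Eop (gradient H0 p) + u0 p) 1
      rw [PiLp.add_apply, hgrad p, hE2, hG2, hX2, hu2]; ring
    · show X p 2 = (Eop (gradient H0 p) + u0 p) 2
      rw [PiLp.add_apply, hgrad p, hE3, hG3, hX3, hu3]; ring
  have hH00 : H0 0 = 0 := by
    rw [hH0]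
    norm_num
  have hcd : ContDiff ℝ 1 H0 := by rw [hH0']; exact contDiff_expr μ a
  refine ⟨⟨hcd, hH00, hcont, hborth, hdecomp0⟩, ?_, ?_⟩
  · intro H u hHc hH00' hucont huorth hdecomp
    -- component equations for gradient H
    have hgradH : ∀ q : ES, fderiv ℝ H q q - fderiv ℝ H0 q q = 0 := by
      intro q
      have comp : ∀ (G : ES → ℝ) (v : ES → ES), (∀ p, X p = Eop (gradient G p) + v p) →
          fderiv ℝ G q q = (X q 0 - v q 0) * q 0 + (X q 1 - v q 1) * q 1 +
            (v q 2 - X q 2) * q 2 := by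
        intro G v hd
        obtain ⟨hE1, hE2, hE3⟩ := hEop (gradient G q)
        have h0 : X q 0 = (Eop (gradient G q) + v q) 0 := by rw [hd q]
        have h1 : X q 1 = (Eop (gradient G q) + v q) 1 := by rw [hd q]
        have h2 : X q 2 = (Eop (gradient G q) + v q) 2 := by rw [hd q]
        rw [show ∀ r : Fin 3, (Eop (gradient G q) + v q) r = Eop (gradient G q) r + v q r
          from fun r => rfl] at h0 h1 h2
        rw [hE1] at h0; rw [hE2] at h1; rw [hE3] at h2
        rw [fderiv_eq_inner_grad, inner_three]
        have e0 : gradient G q 0 = X q 0 - v q 0 := by rw [h0]; ring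
        have e1 : gradient G q 1 = X q 1 - v q 1 := by rw [h1]; ring
        have e2 : gradient G q 2 = v q 2 - X q 2 := by
          have : -(gradient G q 2) = X q 2 - v q 2 := by rw [h2]; ring
          linarith
        rw [e0, e1, e2]
      have cH := comp H u hdecomp
      have cH0 := comp H0 u0 hdecomp0
      have bH := huorth q
      have bH0 := hborth q
      rw [hb] at bH bH0
      rw [cH, cH0]
      nlinarith [bH, bH0]
    have hkey := key_const (fun q => H q - H0 q) (hHc.sub hcd)
      (fun q => by
        rw [fderiv_fun_sub ((hHc.differentiable (by norm_num)) q) ((hcd.differentiable (by norm_num)) q)]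
        rw [ContinuousLinearMap.sub_apply]
        exact hgradH q)
      (by simp [hH00', hH00])
    have hHeq : H = H0 := by
      funext p
      have h : H p - H0 p = 0 := hkey p
      linarith
    refine ⟨hHeq, ?_⟩
    funext p
    have h1 := hdecomp p
    have h2 := hdecomp0 p
    rw [hHeq] at h1
    rw [h1] at h2
    exact add_left_cancel h2
  · intro ha0 p
    ext i
    obtain ⟨h1, h2, h3⟩ := hu0 p
    fin_cases i
    · simpa [ha0] using h1
    · simpa [ha0] using h2
    · simpa using h3
end
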